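/- arXiv:1904.04535 — 5 statements merged into one kernel-verified Lean document; each statement's English description precedes it below -/
import Mathlib

section
/- Let v1, v2 : [0,1] → ℝ be C¹, nonincreasing, nonnegative. Define S(u,w) = (v2(w) - v1(u))⁺·u - (v2(w) - v1(u))⁻·w on [0,1]². Then S is monotone: for fixed w, u ↦ S(u,w) is nondecreasing, and for fixed u, w ↦ S(u,w) is nonincreasing. -/
open Set

lemma aux_u (d d' u u' w : ℝ) (hd : d ≤ d') (hu : 0 ≤ u) (huu : u ≤ u') (hw : 0 ≤ w) :
    max d 0 * u + min d 0 * w ≤ max d' 0 * u' + min d' 0 * w := by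
  rcases le_total 0 d' with h' | h'
  · rw [max_eq_left h', min_eq_right h']
    rcases le_total 0 d with h | h
    · rw [max_eq_left h, min_eq_right h]
      nlinarith
    · rw [max_eq_right h, min_eq_left h]
      nlinarith
  · have h : d ≤ 0 := hd.trans h'
    rw [max_eq_right h, min_eq_left h, max_eq_right h', min_eq_left h']
    nlinarith

lemma aux_w (e d u w w' : ℝ) (he : e ≤ d) (hu : 0 ≤ u) (hw : 0 ≤ w) (hww : w ≤ w') :
    max e 0 * u + min e 0 * w' ≤ max d 0 * u + min d 0 * w := by
  rcases le_total 0 e with h | h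
  · have hd : 0 ≤ d := h.trans he
    rw [max_eq_left h, min_eq_right h, max_eq_left hd, min_eq_right hd]
    nlinarith
  · rw [max_eq_right h, min_eq_left h]
    rcases le_total 0 d with hd | hd
    · rw [max_eq_left hd, min_eq_right hd]
      nlinarith
    · rw [max_eq_right hd, min_eq_left hd]
      nlinarith

/-- Monotonicity of the lane-change source term: `S(u,w)` is nondecreasing in `u`
and nonincreasing in `w`, when `v1, v2` are `C¹`, nonincreasing and nonnegative. -/
theorem source_monotone (v1 v2 : ℝ → ℝ)
    (hdiff1 : ∀ x ∈ Icc (0:ℝ) 1, DifferentiableAt ℝ v1 x)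
    (hdiff2 : ∀ x ∈ Icc (0:ℝ) 1, DifferentiableAt ℝ v2 x)
    (hcont1 : ContinuousOn (deriv v1) (Icc 0 1))
    (hcont2 : ContinuousOn (deriv v2) (Icc 0 1))
    (hanti1 : AntitoneOn v1 (Icc 0 1)) (hanti2 : AntitoneOn v2 (Icc 0 1))
    (hpos1 : ∀ x ∈ Icc (0:ℝ) 1, 0 ≤ v1 x)
    (hpos2 : ∀ x ∈ Icc (0:ℝ) 1, 0 ≤ v2 x)
    (S : ℝ → ℝ → ℝ)
    (hS : ∀ u w, S u w = max (v2 w - v1 u) 0 * u - (-(min (v2 w - v1 u) 0)) * w) :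
    (∀ w ∈ Icc (0:ℝ) 1, ∀ u ∈ Icc (0:ℝ) 1, ∀ u' ∈ Icc (0:ℝ) 1,
      u ≤ u' → S u w ≤ S u' w) ∧
    (∀ u ∈ Icc (0:ℝ) 1, ∀ w ∈ Icc (0:ℝ) 1, ∀ w' ∈ Icc (0:ℝ) 1,
      w ≤ w' → S u w' ≤ S u w) := by
  constructor
  · intro w hw u hu u' hu' huu
    rw [hS, hS]
    have h1 : v1 u' ≤ v1 u := hanti1 hu hu' huu
    have := aux_u (v2 w - v1 u) (v2 w - v1 u') u u' w (by linarith) hu.1 huu hw.1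
    linarith
  · intro u hu w hw w' hw' hww
    rw [hS, hS]
    have h2 : v2 w' ≤ v2 w := hanti2 hw hw' hww
    have := aux_w (v2 w' - v1 u) (v2 w - v1 u) u w w' (by linarith) hu.1 hw.1 hww
    linarith
end

section
/- Let v1, v2, σ1, σ2 ∈ [0,1] and let vℓ1, vℓ2 : [0,1] → ℝ be C¹ nonincreasing nonnegative speed functions with ‖vℓ1‖_{C¹}, ‖vℓ2‖_{C¹} ≤ 𝒱. Define S(u,w) = (vℓ2(w) - vℓ1(u))⁺·u - (vℓ2(w) - vℓ1(u))⁻·w. If ρ > σ (with ρ, σ ∈ [0,1]) then, for any ρ₋, σ₋, ρ₊, σ₊ ∈ [0,1], S(ρ₋, ρ) - S(σ₋, σ) - S(ρ, ρ₊) + S(σ, σ₊) ≤ 𝒱·((ρ₋ - σ₋)⁺ + (ρ₊ - σ₊)⁺) (using that in this form S with appropriate indices is nondecreasing in the first and nonincreasing in the second argument, both with Lipschitz constant ≤ 𝒱). -/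
open Set

/-- Key comparison estimate on the source terms used in the L¹-stability proof:
if `ρ > σ`, then `S(ρ₋,ρ) - S(σ₋,σ) - S(ρ,ρ₊) + S(σ,σ₊) ≤ 𝒱·((ρ₋-σ₋)⁺ + (ρ₊-σ₊)⁺)`. -/
theorem source_comparison (v1 v2 : ℝ → ℝ) (𝒱 A B : ℝ)
    (hdiff1 : ∀ x ∈ Icc (0:ℝ) 1, DifferentiableAt ℝ v1 x)
    (hdiff2 : ∀ x ∈ Icc (0:ℝ) 1, DifferentiableAt ℝ v2 x)
    (hcont1 : ContinuousOn (deriv v1) (Icc 0 1))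
    (hcont2 : ContinuousOn (deriv v2) (Icc 0 1))
    (hanti1 : AntitoneOn v1 (Icc 0 1)) (hanti2 : AntitoneOn v2 (Icc 0 1))
    (hpos1 : ∀ x ∈ Icc (0:ℝ) 1, 0 ≤ v1 x)
    (hpos2 : ∀ x ∈ Icc (0:ℝ) 1, 0 ≤ v2 x)
    (hA : ∀ x ∈ Icc (0:ℝ) 1, |v1 x| ≤ A ∧ |v2 x| ≤ A)
    (hB : ∀ x ∈ Icc (0:ℝ) 1, |deriv v1 x| ≤ B ∧ |deriv v2 x| ≤ B)
    (hAB : A + B ≤ 𝒱)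
    (S : ℝ → ℝ → ℝ)
    (hS : ∀ u w, S u w = max (v2 w - v1 u) 0 * u - (-(min (v2 w - v1 u) 0)) * w)
    (ρ σ ρm σm ρp σp : ℝ)
    (hρ : ρ ∈ Icc (0:ℝ) 1) (hσ : σ ∈ Icc (0:ℝ) 1)
    (hρm : ρm ∈ Icc (0:ℝ) 1) (hσm : σm ∈ Icc (0:ℝ) 1)
    (hρp : ρp ∈ Icc (0:ℝ) 1) (hσp : σp ∈ Icc (0:ℝ) 1)
    (hgt : σ < ρ) :
    S ρm ρ - S σm σ - S ρ ρp + S σ σp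
      ≤ 𝒱 * (max (ρm - σm) 0 + max (ρp - σp) 0) := by
  have h01 : (0:ℝ) ∈ Icc (0:ℝ) 1 := ⟨le_refl 0, by norm_num⟩
  have hA0 : (0:ℝ) ≤ A := le_trans (abs_nonneg _) (hA 0 h01).1
  have hB0 : (0:ℝ) ≤ B := le_trans (abs_nonneg _) (hB 0 h01).1
  have hV0 : (0:ℝ) ≤ 𝒱 := le_trans (by linarith) hAB
  have hlip1 : ∀ x ∈ Icc (0:ℝ) 1, ∀ y ∈ Icc (0:ℝ) 1, |v1 y - v1 x| ≤ B * |y - x| := by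
    intro x hx y hy
    have := (convex_Icc (0:ℝ) 1).norm_image_sub_le_of_norm_deriv_le hdiff1
      (fun z hz => by simpa using (hB z hz).1) hx hy
    simpa using this
  have hlip2 : ∀ x ∈ Icc (0:ℝ) 1, ∀ y ∈ Icc (0:ℝ) 1, |v2 y - v2 x| ≤ B * |y - x| := by
    intro x hx y hy
    have := (convex_Icc (0:ℝ) 1).norm_image_sub_le_of_norm_deriv_le hdiff2
      (fun z hz => by simpa using (hB z hz).2) hx hy
    simpa using this
  -- monotone + Lipschitz in the first argument
  have key1 : ∀ u ∈ Icc (0:ℝ) 1, ∀ u' ∈ Icc (0:ℝ) 1, ∀ w ∈ Icc (0:ℝ) 1, u' ≤ u →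
      S u' w ≤ S u w ∧ S u w - S u' w ≤ 𝒱 * (u - u') := by
    intro u hu u' hu' w hw hle
    have hD : v2 w - v1 u' ≤ v2 w - v1 u := by
      have := hanti1 hu' hu hle; linarith
    have hDlip : (v2 w - v1 u) - (v2 w - v1 u') ≤ B * (u - u') := by
      have h1 := hlip1 u' hu' u hu
      rw [abs_of_nonneg (by linarith : (0:ℝ) ≤ u - u')] at h1
      have h2 : -(B * (u - u')) ≤ v1 u - v1 u' := neg_le_of_abs_le h1
      linarith
    have hmax : max (v2 w - v1 u') 0 ≤ max (v2 w - v1 u) 0 := max_le_max hD le_rfl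
    have hmin : min (v2 w - v1 u') 0 ≤ min (v2 w - v1 u) 0 := min_le_min hD le_rfl
    have hsum1 : max (v2 w - v1 u) 0 + min (v2 w - v1 u) 0 = v2 w - v1 u := by simpa using max_add_min _ (0:ℝ)
    have hsum2 : max (v2 w - v1 u') 0 + min (v2 w - v1 u') 0 = v2 w - v1 u' := by simpa using max_add_min _ (0:ℝ)
    have hDA : max (v2 w - v1 u') 0 ≤ A := by
      have h1 := (hA w hw).2
      have h2 := hpos1 u' hu'
      have h3 := (abs_le.mp h1).2
      exact max_le (by linarith) hA0
    have hM0 : (0:ℝ) ≤ max (v2 w - v1 u') 0 := le_max_right _ _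
    rw [hS, hS]
    constructor
    · nlinarith [mul_nonneg (sub_nonneg.2 hmax) hu.1,
        mul_nonneg hM0 (sub_nonneg.2 hle),
        mul_nonneg (sub_nonneg.2 hmin) hw.1]
    · nlinarith [mul_nonneg (sub_nonneg.2 hmax) (sub_nonneg.2 hu.2),
        mul_nonneg (sub_nonneg.2 hmin) (sub_nonneg.2 hw.2),
        mul_le_mul_of_nonneg_right hDA (sub_nonneg.2 hle),
        mul_le_mul_of_nonneg_right hAB (sub_nonneg.2 hle),
        mul_nonneg (sub_nonneg.2 hmax) hu.1,
        mul_nonneg (sub_nonneg.2 hmin) hw.1]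
  -- antitone + Lipschitz in the second argument
  have key2 : ∀ u ∈ Icc (0:ℝ) 1, ∀ w ∈ Icc (0:ℝ) 1, ∀ w' ∈ Icc (0:ℝ) 1, w' ≤ w →
      S u w ≤ S u w' ∧ S u w' - S u w ≤ 𝒱 * (w - w') := by
    intro u hu w hw w' hw' hle
    have hE : v2 w - v1 u ≤ v2 w' - v1 u := by
      have := hanti2 hw' hw hle; linarith
    have hElip : (v2 w' - v1 u) - (v2 w - v1 u) ≤ B * (w - w') := by
      have h1 := hlip2 w' hw' w hw
      rw [abs_of_nonneg (by linarith : (0:ℝ) ≤ w - w')] at h1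
      have h2 : -(B * (w - w')) ≤ v2 w - v2 w' := neg_le_of_abs_le h1
      linarith
    have hmax : max (v2 w - v1 u) 0 ≤ max (v2 w' - v1 u) 0 := max_le_max hE le_rfl
    have hmin : min (v2 w - v1 u) 0 ≤ min (v2 w' - v1 u) 0 := min_le_min hE le_rfl
    have hsum1 : max (v2 w - v1 u) 0 + min (v2 w - v1 u) 0 = v2 w - v1 u := by simpa using max_add_min _ (0:ℝ)
    have hsum2 : max (v2 w' - v1 u) 0 + min (v2 w' - v1 u) 0 = v2 w' - v1 u := by simpa using max_add_min _ (0:ℝ)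
    have hmA : -A ≤ min (v2 w - v1 u) 0 := by
      have h1 := (hA u hu).1
      have h2 := hpos2 w hw
      have h3 := (abs_le.mp h1).2
      exact le_min (by linarith) (by linarith)
    have hm0 : min (v2 w - v1 u) 0 ≤ 0 := min_le_right _ _
    rw [hS, hS]
    constructor
    · nlinarith [mul_nonneg (sub_nonneg.2 hmax) hu.1,
        mul_nonneg (sub_nonneg.2 hmin) hw'.1,
        mul_nonneg (neg_nonneg.2 hm0) (sub_nonneg.2 hle)]
    · nlinarith [mul_nonneg (sub_nonneg.2 hmax) (sub_nonneg.2 hu.2),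
        mul_nonneg (sub_nonneg.2 hmin) (sub_nonneg.2 hw'.2),
        mul_nonneg (by linarith : (0:ℝ) ≤ A + min (v2 w - v1 u) 0) (sub_nonneg.2 hle),
        mul_le_mul_of_nonneg_right hAB (sub_nonneg.2 hle),
        mul_nonneg (sub_nonneg.2 hmax) hu.1,
        mul_nonneg (sub_nonneg.2 hmin) hw'.1]
  have t1 : S ρm ρ - S σm ρ ≤ 𝒱 * max (ρm - σm) 0 := by
    rcases le_total σm ρm with h | h
    · have h1 := (key1 ρm hρm σm hσm ρ hρ h).2
      rw [max_eq_left (by linarith)]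
      linarith
    · have h1 := (key1 σm hσm ρm hρm ρ hρ h).1
      have h2 : 0 ≤ 𝒱 * max (ρm - σm) 0 := mul_nonneg hV0 (le_max_right _ _)
      linarith
  have t2 : S σm ρ ≤ S σm σ := (key2 σm hσm ρ hρ σ hσ hgt.le).1
  have t3 : S σ σp ≤ S ρ σp := (key1 ρ hρ σ hσ σp hσp hgt.le).1
  have t4 : S ρ σp - S ρ ρp ≤ 𝒱 * max (ρp - σp) 0 := by
    rcases le_total σp ρp with h | h
    · have h1 := (key2 ρ hρ ρp hρp σp hσp h).2
      rw [max_eq_left (by linarith)]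
      linarith
    · have h1 := (key2 ρ hρ σp hσp ρp hρp h).1
      have h2 : 0 ≤ 𝒱 * max (ρp - σp) 0 := mul_nonneg hV0 (le_max_right _ _)
      linarith
  rw [mul_add]
  linarith
end

section
/- Single-cell positivity and boundedness of the splitting step (Case A): let v1, v2, v3 : [0,1] → [0,∞) be C¹, nonincreasing, with v2(1) = 0 and ‖v_i‖_{C¹} ≤ 𝒱 for i = 1,2,3. Let ρ1, ρ2, ρ3 ∈ [0,1] satisfy v2(ρ2) ≥ v1(ρ1) and v3(ρ3) ≥ v2(ρ2). If Δt·𝒱 ≤ 1/2, then ρ2' := ρ2 + Δt·(v2(ρ2) - v1(ρ1))·ρ1 - Δt·(v3(ρ3) - v2(ρ2))·ρ2 satisfies 0 ≤ ρ2' ≤ 1. -/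
open Set

/-- Case A of the invariance of `[0,1]` under the operator-splitting source step:
if `v2(ρ2) ≥ v1(ρ1)` and `v3(ρ3) ≥ v2(ρ2)`, and `Δt·𝒱 ≤ 1/2`, then the updated
value stays in `[0,1]`. -/
theorem splitting_invariance_caseA (v1 v2 v3 : ℝ → ℝ) (𝒱 Δt ρ1 ρ2 ρ3 : ℝ)
    (hdiff1 : ∀ x ∈ Icc (0:ℝ) 1, DifferentiableAt ℝ v1 x)
    (hdiff2 : ∀ x ∈ Icc (0:ℝ) 1, DifferentiableAt ℝ v2 x)
    (hdiff3 : ∀ x ∈ Icc (0:ℝ) 1, DifferentiableAt ℝ v3 x)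
    (hcont1 : ContinuousOn (deriv v1) (Icc 0 1))
    (hcont2 : ContinuousOn (deriv v2) (Icc 0 1))
    (hcont3 : ContinuousOn (deriv v3) (Icc 0 1))
    (hanti1 : AntitoneOn v1 (Icc 0 1)) (hanti2 : AntitoneOn v2 (Icc 0 1))
    (hanti3 : AntitoneOn v3 (Icc 0 1))
    (hpos1 : ∀ x ∈ Icc (0:ℝ) 1, 0 ≤ v1 x)
    (hpos2 : ∀ x ∈ Icc (0:ℝ) 1, 0 ≤ v2 x)
    (hpos3 : ∀ x ∈ Icc (0:ℝ) 1, 0 ≤ v3 x)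
    (hbd1 : ∀ x ∈ Icc (0:ℝ) 1, v1 x ≤ 𝒱 ∧ |deriv v1 x| ≤ 𝒱)
    (hbd2 : ∀ x ∈ Icc (0:ℝ) 1, v2 x ≤ 𝒱 ∧ |deriv v2 x| ≤ 𝒱)
    (hbd3 : ∀ x ∈ Icc (0:ℝ) 1, v3 x ≤ 𝒱 ∧ |deriv v3 x| ≤ 𝒱)
    (hv21 : v2 1 = 0)
    (hρ1 : ρ1 ∈ Icc (0:ℝ) 1) (hρ2 : ρ2 ∈ Icc (0:ℝ) 1) (hρ3 : ρ3 ∈ Icc (0:ℝ) 1)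
    (hcase1 : v1 ρ1 ≤ v2 ρ2) (hcase2 : v2 ρ2 ≤ v3 ρ3)
    (hΔt : 0 ≤ Δt) (hCFL : Δt * 𝒱 ≤ 1/2) :
    ρ2 + Δt * ((v2 ρ2 - v1 ρ1) * ρ1) - Δt * ((v3 ρ3 - v2 ρ2) * ρ2)
      ∈ Icc (0:ℝ) 1 := by
  obtain ⟨h10, h11⟩ := hρ1
  obtain ⟨h20, h21⟩ := hρ2
  obtain ⟨h30, h31⟩ := hρ3
  have hV : (0:ℝ) ≤ 𝒱 := le_trans (abs_nonneg _) (hbd2 0 ⟨le_refl 0, zero_le_one⟩).2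
  -- key Lipschitz-type bound: v2 ρ2 ≤ 𝒱 * (1 - ρ2)
  have hkey : v2 ρ2 ≤ 𝒱 * (1 - ρ2) := by
    rcases eq_or_lt_of_le h21 with heq | hlt
    · simp [heq, hv21]
    · have hc2 : ContinuousOn v2 (Icc ρ2 1) := fun x hx =>
        ((hdiff2 x ⟨le_trans h20 hx.1, hx.2⟩).continuousAt).continuousWithinAt
      have hd2 : ∀ x ∈ Ioo ρ2 1, HasDerivAt v2 (deriv v2 x) x := fun x hx =>
        (hdiff2 x ⟨le_trans h20 hx.1.le, hx.2.le⟩).hasDerivAt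
      obtain ⟨c, hc, hderiv⟩ := exists_hasDerivAt_eq_slope v2 (deriv v2) hlt hc2 hd2
      have hcmem : c ∈ Icc (0:ℝ) 1 := ⟨le_trans h20 hc.1.le, hc.2.le⟩
      have hbnd := (hbd2 c hcmem).2
      have hne : (1:ℝ) - ρ2 ≠ 0 := by linarith
      have : v2 ρ2 = -(deriv v2 c) * (1 - ρ2) := by
        field_simp [hv21, hne] at hderiv
        nlinarith [hderiv]
      rw [this]
      have : -(deriv v2 c) ≤ 𝒱 := by
        have := neg_abs_le (deriv v2 c)
        linarith
      nlinarith [sub_nonneg.mpr h21]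
  have hv2pos : 0 ≤ v2 ρ2 := hpos2 ρ2 ⟨h20, h21⟩
  have hv3le : v3 ρ3 ≤ 𝒱 := (hbd3 ρ3 ⟨h30, h31⟩).1
  have hv1pos : 0 ≤ v1 ρ1 := hpos1 ρ1 ⟨h10, h11⟩
  have hv2le : v2 ρ2 ≤ 𝒱 := (hbd2 ρ2 ⟨h20, h21⟩).1
  constructor
  · -- lower bound
    have h1 : 0 ≤ Δt * ((v2 ρ2 - v1 ρ1) * ρ1) := by
      apply mul_nonneg hΔt (mul_nonneg (by linarith) h10)
    have h2 : Δt * ((v3 ρ3 - v2 ρ2) * ρ2) ≤ ρ2 := by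
      have hle : Δt * (v3 ρ3 - v2 ρ2) ≤ 1 := by
        have : Δt * (v3 ρ3 - v2 ρ2) ≤ Δt * 𝒱 :=
          mul_le_mul_of_nonneg_left (by linarith) hΔt
        linarith
      have := mul_le_of_le_one_left h20 hle
      nlinarith
    linarith
  · -- upper bound
    have h3 : Δt * ((v2 ρ2 - v1 ρ1) * ρ1) ≤ Δt * v2 ρ2 := by
      have : (v2 ρ2 - v1 ρ1) * ρ1 ≤ v2 ρ2 := by nlinarith
      exact mul_le_mul_of_nonneg_left this hΔt
    have h4 : Δt * v2 ρ2 ≤ Δt * (𝒱 * (1 - ρ2)) := mul_le_mul_of_nonneg_left hkey hΔt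
    have h5 : Δt * (𝒱 * (1 - ρ2)) ≤ 1 - ρ2 := by nlinarith
    have h6 : 0 ≤ Δt * ((v3 ρ3 - v2 ρ2) * ρ2) :=
      mul_nonneg hΔt (mul_nonneg (by linarith) h20)
    linarith
end

section
/- Single-cell positivity and boundedness of the splitting step (Case D): let v1, v2, v3 : [0,1] → [0,∞) be C¹, nonincreasing, with v2(1) = 0 and ‖v_i‖_{C¹} ≤ 𝒱 for i = 1,2,3. Let ρ1, ρ2, ρ3 ∈ [0,1] satisfy v2(ρ2) < v1(ρ1) and v3(ρ3) < v2(ρ2). If Δt·𝒱 ≤ 1/2, then ρ2' := ρ2 + Δt·(v2(ρ2) - v1(ρ1))·ρ2 - Δt·(v3(ρ3) - v2(ρ2))·ρ3 satisfies 0 ≤ ρ2' ≤ 1. -/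
open Set

/-- Case D of the invariance of `[0,1]` under the operator-splitting source step:
if `v2(ρ2) < v1(ρ1)` and `v3(ρ3) < v2(ρ2)`, and `Δt·𝒱 ≤ 1/2`, then the updated
value stays in `[0,1]`. -/
theorem splitting_invariance_caseD (v1 v2 v3 : ℝ → ℝ) (𝒱 Δt ρ1 ρ2 ρ3 : ℝ)
    (hdiff1 : ∀ x ∈ Icc (0:ℝ) 1, DifferentiableAt ℝ v1 x)
    (hdiff2 : ∀ x ∈ Icc (0:ℝ) 1, DifferentiableAt ℝ v2 x)
    (hdiff3 : ∀ x ∈ Icc (0:ℝ) 1, DifferentiableAt ℝ v3 x)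
    (hcont1 : ContinuousOn (deriv v1) (Icc 0 1))
    (hcont2 : ContinuousOn (deriv v2) (Icc 0 1))
    (hcont3 : ContinuousOn (deriv v3) (Icc 0 1))
    (hanti1 : AntitoneOn v1 (Icc 0 1)) (hanti2 : AntitoneOn v2 (Icc 0 1))
    (hanti3 : AntitoneOn v3 (Icc 0 1))
    (hpos1 : ∀ x ∈ Icc (0:ℝ) 1, 0 ≤ v1 x)
    (hpos2 : ∀ x ∈ Icc (0:ℝ) 1, 0 ≤ v2 x)
    (hpos3 : ∀ x ∈ Icc (0:ℝ) 1, 0 ≤ v3 x)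
    (hbd1 : ∀ x ∈ Icc (0:ℝ) 1, v1 x ≤ 𝒱 ∧ |deriv v1 x| ≤ 𝒱)
    (hbd2 : ∀ x ∈ Icc (0:ℝ) 1, v2 x ≤ 𝒱 ∧ |deriv v2 x| ≤ 𝒱)
    (hbd3 : ∀ x ∈ Icc (0:ℝ) 1, v3 x ≤ 𝒱 ∧ |deriv v3 x| ≤ 𝒱)
    (hv21 : v2 1 = 0)
    (hρ1 : ρ1 ∈ Icc (0:ℝ) 1) (hρ2 : ρ2 ∈ Icc (0:ℝ) 1) (hρ3 : ρ3 ∈ Icc (0:ℝ) 1)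
    (hcase1 : v2 ρ2 < v1 ρ1) (hcase2 : v3 ρ3 < v2 ρ2)
    (hΔt : 0 ≤ Δt) (hCFL : Δt * 𝒱 ≤ 1/2) :
    ρ2 + Δt * ((v2 ρ2 - v1 ρ1) * ρ2) - Δt * ((v3 ρ3 - v2 ρ2) * ρ3)
      ∈ Icc (0:ℝ) 1 := by
  obtain ⟨h20, h21⟩ := hρ2
  obtain ⟨h30, h31⟩ := hρ3
  have hv2ρ2 := hpos2 ρ2 ⟨h20, h21⟩
  have hv3ρ3 := hpos3 ρ3 ⟨h30, h31⟩
  have hv1le := (hbd1 ρ1 hρ1).1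
  -- MVT bound: v2 ρ2 ≤ 𝒱 * (1 - ρ2)
  have hmvt : v2 ρ2 ≤ 𝒱 * (1 - ρ2) := by
    have h := Convex.norm_image_sub_le_of_norm_deriv_le
      (f := v2) (s := Icc (0:ℝ) 1) hdiff2
      (fun x hx => (hbd2 x hx).2) (convex_Icc 0 1) (right_mem_Icc.2 one_pos.le)
      ⟨h20, h21⟩
    rw [hv21] at h
    have : |v2 ρ2| ≤ 𝒱 * |ρ2 - 1| := by simpa using h
    have h2 : |ρ2 - 1| = 1 - ρ2 := by rw [abs_sub_comm]; exact abs_of_nonneg (by linarith)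
    calc v2 ρ2 ≤ |v2 ρ2| := le_abs_self _
      _ ≤ 𝒱 * (1 - ρ2) := by rw [← h2]; exact this
  have h𝒱 : 0 ≤ 𝒱 := le_trans (abs_nonneg _) (hbd2 ρ2 ⟨h20, h21⟩).2
  have hΔt𝒱 : Δt * 𝒱 ≤ 1/2 := hCFL
  constructor
  · -- lower bound
    have h1 : v1 ρ1 - v2 ρ2 ≤ 𝒱 := by linarith
    have : Δt * ((v1 ρ1 - v2 ρ2) * ρ2) ≤ (1/2) * ρ2 := by
      have := mul_le_mul_of_nonneg_right h1 h20
      nlinarith [mul_le_mul_of_nonneg_left this hΔt]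
    nlinarith [mul_nonneg hΔt (mul_nonneg (by linarith : (0:ℝ) ≤ v2 ρ2 - v3 ρ3) h30)]
  · -- upper bound
    have h1 : Δt * ((v2 ρ2 - v3 ρ3) * ρ3) ≤ Δt * v2 ρ2 := by
      have : (v2 ρ2 - v3 ρ3) * ρ3 ≤ v2 ρ2 := by nlinarith
      exact mul_le_mul_of_nonneg_left this hΔt
    have h2 : Δt * v2 ρ2 ≤ Δt * 𝒱 * (1 - ρ2) :=
      by nlinarith [mul_le_mul_of_nonneg_left hmvt hΔt]
    have h3 : Δt * 𝒱 * (1 - ρ2) ≤ 1 - ρ2 := by nlinarith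
    nlinarith [mul_nonneg hΔt (mul_nonneg (by linarith : (0:ℝ) ≤ v1 ρ1 - v2 ρ2) h20)]
end

section
/- L¹-contraction of a monotone conservative three-point scheme: let G : [0,1]² → ℝ be nondecreasing in its first argument, nonincreasing in its second, Lipschitz in both with constant 𝒱, and let λ·𝒱 ≤ 1/2. For sequences (u_k), (w_k) ∈ ℓ¹(ℤ; [0,1]), define Hu_k = u_k - λ·(G(u_k, u_{k+1}) - G(u_{k-1}, u_k)) and similarly Hw. Then ∑_{k∈ℤ} |Hu_k - Hw_k| ≤ ∑_{k∈ℤ} |u_k - w_k|. -/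
open Set

lemma key_abs (d a b : ℝ) (ha : 0 ≤ a * d) (hb : b * d ≤ 0)
    (ha2 : |a| ≤ |d| / 2) (hb2 : |b| ≤ |d| / 2) :
    |d - a + b| ≤ |d| - |a| - |b| := by
  rcases abs_cases d with ⟨hd, hd'⟩ | ⟨hd, hd'⟩ <;>
  rcases abs_cases a with ⟨haa, ha'⟩ | ⟨haa, ha'⟩ <;>
  rcases abs_cases b with ⟨hbb, hb'⟩ | ⟨hbb, hb'⟩ <;>
  rw [abs_le] <;> constructor <;> nlinarith

/-- L¹-contraction of a monotone conservative three-point scheme under a CFL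
condition. -/
theorem scheme_l1_contraction (G : ℝ → ℝ → ℝ) (𝒱 lam : ℝ)
    (hlam : 0 ≤ lam) (hCFL : lam * 𝒱 ≤ 1/2)
    (hmono1 : ∀ w ∈ Icc (0:ℝ) 1, ∀ u ∈ Icc (0:ℝ) 1, ∀ u' ∈ Icc (0:ℝ) 1,
      u ≤ u' → G u w ≤ G u' w)
    (hmono2 : ∀ u ∈ Icc (0:ℝ) 1, ∀ w ∈ Icc (0:ℝ) 1, ∀ w' ∈ Icc (0:ℝ) 1,
      w ≤ w' → G u w' ≤ G u w)
    (hLip1 : ∀ u ∈ Icc (0:ℝ) 1, ∀ u' ∈ Icc (0:ℝ) 1, ∀ w ∈ Icc (0:ℝ) 1,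
      |G u w - G u' w| ≤ 𝒱 * |u - u'|)
    (hLip2 : ∀ u ∈ Icc (0:ℝ) 1, ∀ w ∈ Icc (0:ℝ) 1, ∀ w' ∈ Icc (0:ℝ) 1,
      |G u w - G u w'| ≤ 𝒱 * |w - w'|)
    (u w : ℤ → ℝ)
    (hu : ∀ k, u k ∈ Icc (0:ℝ) 1) (hw : ∀ k, w k ∈ Icc (0:ℝ) 1)
    (hsum : Summable fun k => |u k - w k|)
    (Hu Hw : ℤ → ℝ)
    (hHu : ∀ k, Hu k = u k - lam * (G (u k) (u (k+1)) - G (u (k-1)) (u k)))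
    (hHw : ∀ k, Hw k = w k - lam * (G (w k) (w (k+1)) - G (w (k-1)) (w k))) :
    Summable (fun k => |Hu k - Hw k|) ∧
    ∑' k, |Hu k - Hw k| ≤ ∑' k, |u k - w k| := by
  set d : ℤ → ℝ := fun k => u k - w k with hd
  set A : ℤ → ℝ := fun k => lam * (G (u k) (u (k+1)) - G (w k) (u (k+1))) with hA
  set B : ℤ → ℝ := fun k => lam * (G (w k) (u (k+1)) - G (w k) (w (k+1))) with hB
  -- Lipschitz bounds
  have hAbnd : ∀ k, |A k| ≤ |d k| / 2 := by
    intro k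
    have h1 := hLip1 (u k) (hu k) (w k) (hw k) (u (k+1)) (hu (k+1))
    have h2 : lam * (𝒱 * |u k - w k|) ≤ (1/2) * |d k| := by
      have := abs_nonneg (u k - w k)
      have : lam * 𝒱 * |u k - w k| ≤ (1/2) * |d k| := by
        apply mul_le_mul_of_nonneg_right hCFL (abs_nonneg _)
      linarith [this]
    calc |A k| = lam * |G (u k) (u (k+1)) - G (w k) (u (k+1))| := by
          rw [hA, abs_mul, abs_of_nonneg hlam]
      _ ≤ lam * (𝒱 * |u k - w k|) := by
          exact mul_le_mul_of_nonneg_left h1 hlam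
      _ ≤ (1/2) * |d k| := h2
      _ = |d k| / 2 := by ring
  have hBbnd : ∀ k, |B k| ≤ |d (k+1)| / 2 := by
    intro k
    have h1 := hLip2 (w k) (hw k) (u (k+1)) (hu (k+1)) (w (k+1)) (hw (k+1))
    have h2 : lam * (𝒱 * |u (k+1) - w (k+1)|) ≤ (1/2) * |d (k+1)| := by
      have : lam * 𝒱 * |u (k+1) - w (k+1)| ≤ (1/2) * |d (k+1)| := by
        apply mul_le_mul_of_nonneg_right hCFL (abs_nonneg _)
      linarith [this]
    calc |B k| = lam * |G (w k) (u (k+1)) - G (w k) (w (k+1))| := by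
          rw [hB, abs_mul, abs_of_nonneg hlam]
      _ ≤ lam * (𝒱 * |u (k+1) - w (k+1)|) := mul_le_mul_of_nonneg_left h1 hlam
      _ ≤ (1/2) * |d (k+1)| := h2
      _ = |d (k+1)| / 2 := by ring
  -- sign conditions
  have hAsign : ∀ k, 0 ≤ A k * d k := by
    intro k
    rcases le_total (u k) (w k) with h | h
    · have := hmono1 (u (k+1)) (hu (k+1)) (u k) (hu k) (w k) (hw k) h
      have hA0 : A k ≤ 0 := by
        rw [hA]; exact mul_nonpos_of_nonneg_of_nonpos hlam (by linarith)
      have : d k ≤ 0 := by simp [hd]; linarith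
      nlinarith
    · have := hmono1 (u (k+1)) (hu (k+1)) (w k) (hw k) (u k) (hu k) h
      have hA0 : 0 ≤ A k := by
        rw [hA]; exact mul_nonneg hlam (by linarith)
      have : 0 ≤ d k := by simp [hd]; linarith
      exact mul_nonneg hA0 this
  have hBsign : ∀ k, B k * d (k+1) ≤ 0 := by
    intro k
    rcases le_total (u (k+1)) (w (k+1)) with h | h
    · have := hmono2 (w k) (hw k) (u (k+1)) (hu (k+1)) (w (k+1)) (hw (k+1)) h
      have hB0 : 0 ≤ B k := by
        rw [hB]; exact mul_nonneg hlam (by linarith)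
      have : d (k+1) ≤ 0 := by simp [hd]; linarith
      exact mul_nonpos_of_nonneg_of_nonpos hB0 this
    · have := hmono2 (w k) (hw k) (w (k+1)) (hw (k+1)) (u (k+1)) (hu (k+1)) h
      have hB0 : B k ≤ 0 := by
        rw [hB]; exact mul_nonpos_of_nonneg_of_nonpos hlam (by linarith)
      have : 0 ≤ d (k+1) := by simp [hd]; linarith
      exact mul_nonpos_of_nonpos_of_nonneg hB0 this
  -- main pointwise inequality
  have hmain : ∀ k, |Hu k - Hw k| + |A k| + |B (k-1)| ≤ |d k| + |A (k-1)| + |B k| := by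
    intro k
    have hk : k - 1 + 1 = k := by ring
    have hdecomp : Hu k - Hw k = (d k - A k + B (k-1)) + (A (k-1) - B k) := by
      rw [hHu, hHw, hd, hA, hB]
      simp only [hk]
      ring
    have hBk1 : B (k-1) * d k ≤ 0 := by
      have := hBsign (k-1); rwa [hk] at this
    have hBk1b : |B (k-1)| ≤ |d k| / 2 := by
      have := hBbnd (k-1); rwa [hk] at this
    have hkey := key_abs (d k) (A k) (B (k-1)) (hAsign k) hBk1 (hAbnd k) hBk1b
    have hstep : |Hu k - Hw k| ≤ (|d k| - |A k| - |B (k-1)|) + (|A (k-1)| + |B k|) := by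
      calc |Hu k - Hw k| = |(d k - A k + B (k-1)) + (A (k-1) - B k)| := by rw [hdecomp]
        _ ≤ |d k - A k + B (k-1)| + |A (k-1) - B k| := abs_add_le _ _
        _ ≤ (|d k| - |A k| - |B (k-1)|) + (|A (k-1)| + |B k|) := by
            gcongr
            exact abs_sub _ _
    linarith
  -- summability pieces
  have hfA : Summable fun k => |A k| := by
    apply Summable.of_nonneg_of_le (fun k => abs_nonneg _) hAbnd
    simpa [div_eq_mul_inv] using hsum.mul_right (2:ℝ)⁻¹
  have hshift1 : Summable fun k : ℤ => |d (k+1)| :=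
    ((Equiv.addRight (1:ℤ)).summable_iff (f := fun k => |d k|)).mpr hsum
  have hfB : Summable fun k => |B k| := by
    apply Summable.of_nonneg_of_le (fun k => abs_nonneg _) hBbnd
    simpa [div_eq_mul_inv] using hshift1.mul_right (2:ℝ)⁻¹
  have hAshift : Summable fun k : ℤ => |A (k-1)| :=
    ((Equiv.subRight (1:ℤ)).summable_iff (f := fun k => |A k|)).mpr hfA
  have hBshift : Summable fun k : ℤ => |B (k-1)| :=
    ((Equiv.subRight (1:ℤ)).summable_iff (f := fun k => |B k|)).mpr hfB
  have hHsum : Summable fun k => |Hu k - Hw k| := by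
    refine Summable.of_nonneg_of_le (f := fun k => |d k| + |A (k-1)| + |B k|)
      (fun k => abs_nonneg _) (fun k => ?_) ((hsum.add hAshift).add hfB)
    have h1 := hmain k
    have h2 := abs_nonneg (A k)
    have h3 := abs_nonneg (B (k-1))
    show |Hu k - Hw k| ≤ |d k| + |A (k - 1)| + |B k|
    linarith
  refine ⟨hHsum, ?_⟩
  have hLsum : Summable fun k => |Hu k - Hw k| + |A k| + |B (k-1)| :=
    (hHsum.add hfA).add hBshift
  have hRsum : Summable fun k => |d k| + |A (k-1)| + |B k| :=
    (hsum.add hAshift).add hfB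
  have h1 : ∑' k, (|Hu k - Hw k| + |A k| + |B (k-1)|)
      ≤ ∑' k, (|d k| + |A (k-1)| + |B k|) :=
    Summable.tsum_le_tsum hmain hLsum hRsum
  rw [Summable.tsum_add (hHsum.add hfA) hBshift, Summable.tsum_add hHsum hfA,
      Summable.tsum_add (hsum.add hAshift) hfB, Summable.tsum_add hsum hAshift] at h1
  have e1 : ∑' k : ℤ, |A (k-1)| = ∑' k, |A k| :=
    (Equiv.subRight (1:ℤ)).tsum_eq (fun k => |A k|)
  have e2 : ∑' k : ℤ, |B (k-1)| = ∑' k, |B k| :=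
    (Equiv.subRight (1:ℤ)).tsum_eq (fun k => |B k|)
  rw [e1, e2] at h1
  linarith
end
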